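/- Let k, m ≥ 1, let q : Fin m → ℝ be nonnegative with ∑_s q(s) = 1, and let y : Fin m → Fin k → ℝ be nonnegative. Then there exists p : Fin m → Fin k → ℝ such that p(s,i) ≥ 0 for all s, i; ∑_{i=1}^k p(s,i) = 1 for every s; and for every l ∈ {1,…,k}: (1 − 1/k) · ∑_s q(s) ∑_{i=1}^k p(s,i) y(s,i) ≥ ∑_s q(s) (1 − p(s,l)) y(s,l). In particular, the feasible region of the linear program used in the derandomized algorithm is nonempty. -/

import Mathlib

/-- Weighted AM–GM / Young: `(n+1) b^n a ≤ a^(n+1) + n b^(n+1)` for nonneg reals. -/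
lemma young_aux (n : ℕ) (a b : ℝ) (ha : 0 ≤ a) (hb : 0 ≤ b) :
    (n + 1 : ℝ) * (b ^ n * a) ≤ a ^ (n + 1) + (n : ℝ) * b ^ (n + 1) := by
  induction n with
  | zero => simp
  | succ n ih =>
    have hn : (0 : ℝ) ≤ (n : ℝ) := Nat.cast_nonneg n
    have h1 : (n + 1 : ℝ) * (b ^ n * a) * a ≤ (a ^ (n + 1) + (n : ℝ) * b ^ (n + 1)) * a :=
      mul_le_mul_of_nonneg_right ih ha
    have h2 : 0 ≤ b ^ n * (a - b) ^ 2 := by positivity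
    have ea : a ^ (n + 1 + 1) = a ^ (n + 1) * a := pow_succ a (n + 1)
    have eb : b ^ (n + 1 + 1) = b ^ (n + 1) * b := pow_succ b (n + 1)
    have eb' : b ^ (n + 1) = b ^ n * b := pow_succ b n
    push_cast
    rw [eb'] at h1
    rw [ea, eb, eb']
    nlinarith [h1, h2, mul_nonneg hn h2]

/-- Let `k, m ≥ 1`, `q : Fin m → ℝ` nonnegative with `∑ q = 1`, and
`y : Fin m → Fin k → ℝ` nonnegative. Then there exists `p` with `p(s,i) ≥ 0`,
`∑_i p(s,i) = 1` for every `s`, and for every `l`: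
`(1 − 1/k) ∑_s q(s) ∑_i p(s,i) y(s,i) ≥ ∑_s q(s)(1 − p(s,l)) y(s,l)`.
In particular, the LP of the derandomized algorithm is feasible. -/
theorem derandomized_lp_feasible
    (k m : ℕ) (hk : 1 ≤ k) (hm : 1 ≤ m)
    (q : Fin m → ℝ) (hq : ∀ s, 0 ≤ q s) (hq1 : ∑ s, q s = 1)
    (y : Fin m → Fin k → ℝ) (hy : ∀ s i, 0 ≤ y s i) :
    ∃ p : Fin m → Fin k → ℝ,
      (∀ s i, 0 ≤ p s i) ∧
      (∀ s, ∑ i, p s i = 1) ∧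
      ∀ l, ∑ s, q s * ((1 - p s l) * y s l) ≤
        (1 - 1 / (k : ℝ)) * ∑ s, q s * ∑ i, p s i * y s i := by
  obtain ⟨n, rfl⟩ : ∃ n, k = n + 1 := ⟨k - 1, (Nat.succ_pred_eq_of_pos hk).symm⟩
  set Q : Fin m → ℝ := fun s => ∑ j, y s j ^ n with hQdef
  have hQnn : ∀ s, 0 ≤ Q s := fun s =>
    Finset.sum_nonneg fun j _ => pow_nonneg (hy s j) n
  have hn1 : (0 : ℝ) < (n : ℝ) + 1 := by positivity
  refine ⟨fun s i => if Q s = 0 then 1 / (n + 1 : ℝ) else y s i ^ n / Q s, ?_, ?_, ?_⟩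
  · intro s i
    by_cases h : Q s = 0
    · simp only [h, if_true]
      positivity
    · simp only [h, if_false]
      exact div_nonneg (pow_nonneg (hy s i) n) (hQnn s)
  · intro s
    by_cases h : Q s = 0
    · simp only [h, if_true]
      rw [Finset.sum_const, Finset.card_univ, Fintype.card_fin, nsmul_eq_mul]
      push_cast
      field_simp
    · simp only [h, if_false]
      rw [← Finset.sum_div]
      exact div_self h
  · intro l
    -- pointwise inequality per s
    have key : ∀ s, q s * ((1 - (if Q s = 0 then 1 / (n + 1 : ℝ) else y s l ^ n / Q s)) * y s l)
        ≤ q s * ((1 - 1 / ((n : ℝ) + 1)) *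
          ∑ i, (if Q s = 0 then 1 / (n + 1 : ℝ) else y s i ^ n / Q s) * y s i) := by
      intro s
      apply mul_le_mul_of_nonneg_left _ (hq s)
      by_cases h : Q s = 0
      · -- all y s i = 0
        have hzero : ∀ i, y s i = 0 := by
          intro i
          rcases Nat.eq_zero_or_pos n with hn0 | hn0
          · exfalso
            have hQ1 : Q s = (n : ℝ) + 1 := by
              simp [hQdef, hn0]
            have h0 : (n : ℝ) + 1 = 0 := by rw [← hQ1]; exact h
            linarith
          · have hterm : y s i ^ n = 0 :=
              (Finset.sum_eq_zero_iff_of_nonneg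
                (fun j _ => pow_nonneg (hy s j) n)).mp h i (Finset.mem_univ i)
            exact pow_eq_zero_iff (by omega : n ≠ 0) |>.mp hterm
        simp [h, hzero]
      · simp only [h, if_false]
        have hQpos : 0 < Q s := lt_of_le_of_ne (hQnn s) (Ne.symm h)
        set T : ℝ := ∑ i, y s i ^ n * y s i with hTdef
        have hsum : (n + 1 : ℝ) * (Q s * y s l) ≤ (n + 1 : ℝ) * (y s l ^ n * y s l)
            + (n : ℝ) * T := by
          have h2 : ∑ i, (n + 1 : ℝ) * (y s i ^ n * y s l)
              ≤ ∑ i : Fin (n+1), (y s l ^ (n + 1) + (n : ℝ) * y s i ^ (n + 1)) :=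
            Finset.sum_le_sum fun i _ => young_aux n (y s l) (y s i) (hy s l) (hy s i)
          have e1 : ∑ i, (n + 1 : ℝ) * (y s i ^ n * y s l)
              = (n + 1 : ℝ) * (Q s * y s l) := by
            rw [hQdef, Finset.sum_mul, Finset.mul_sum]
          have e3 : ∑ i : Fin (n+1), y s i ^ (n + 1) = T :=
            Finset.sum_congr rfl fun i _ => pow_succ _ n
          have e2 : ∑ i : Fin (n+1), (y s l ^ (n + 1) + (n : ℝ) * y s i ^ (n + 1))
              = (n + 1 : ℝ) * (y s l ^ n * y s l) + (n : ℝ) * T := by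
            rw [Finset.sum_add_distrib, Finset.sum_const, ← Finset.mul_sum, e3,
              pow_succ]
            simp only [Finset.card_univ, Fintype.card_fin, nsmul_eq_mul]
            push_cast
            ring
          rw [e1, e2] at h2
          exact h2
        have hrhs : ∑ i, y s i ^ n / Q s * y s i = T / Q s := by
          rw [hTdef, Finset.sum_div]
          exact Finset.sum_congr rfl fun i _ => (div_mul_eq_mul_div _ _ _)
        rw [hrhs]
        have expand : (1 - 1 / ((n : ℝ) + 1)) * (T / Q s)
            = ((n : ℝ) * T) / (((n : ℝ) + 1) * Q s) := by
          field_simp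
          ring
        have expand2 : (1 - y s l ^ n / Q s) * y s l
            = ((Q s - y s l ^ n) * y s l) / Q s := by
          field_simp
        rw [expand, expand2, div_le_div_iff₀ hQpos (by positivity)]
        have h3 : (n + 1 : ℝ) * ((Q s - y s l ^ n) * y s l) ≤ (n : ℝ) * T := by
          nlinarith [hsum]
        have h4 := mul_le_mul_of_nonneg_right h3 (hQnn s)
        nlinarith [h4]
    calc ∑ s, q s * ((1 - (if Q s = 0 then 1/(n+1:ℝ) else y s l ^ n / Q s)) * y s l)
        ≤ ∑ s, q s * ((1 - 1 / ((n:ℝ)+1)) *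
            ∑ i, (if Q s = 0 then 1/(n+1:ℝ) else y s i ^ n / Q s) * y s i) :=
          Finset.sum_le_sum fun s _ => key s
      _ = (1 - 1 / (((n:ℕ)+1 : ℕ) : ℝ)) * ∑ s, q s *
            ∑ i, (if Q s = 0 then 1/(n+1:ℝ) else y s i ^ n / Q s) * y s i := by
          rw [Finset.mul_sum]
          push_cast
          exact Finset.sum_congr rfl fun s _ => by ring
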